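/- arXiv:1001.1625 — 2 statements merged into one kernel-verified Lean document; each statement's English description precedes it below -/
import Mathlib

section
/- Let L be a lattice of rank m in ℝ^n with a shortest nonzero vector v that is α^{(m−1)/2}-unique, where α = 1/(δ − 1/4) and δ ∈ (1/4, 1). If b_1, …, b_m is an LLL-reduced basis of L with parameter δ, then b_1 is a nonzero integer multiple of v; if moreover v is primitive (v is not of the form q·u with u ∈ L and q ∈ ℤ, |q| ≥ 2), then b_1 = v or b_1 = −v. -/
open scoped BigOperators

/-- Gram-Schmidt orthogonalization of the system of vectors `h`. -/
noncomputable def gso {n m : ℕ} (h : Fin m → EuclideanSpace ℝ (Fin n)) :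
    Fin m → EuclideanSpace ℝ (Fin n) :=
  @InnerProductSpace.gramSchmidt ℝ (EuclideanSpace ℝ (Fin n)) _ _ _ (Fin m) _ _
    (inferInstance : WellFoundedLT (Fin m)) h

/-- Gram-Schmidt coefficients `μ i j = ⟨h i, h* j⟩ / ‖h* j‖²`. -/
noncomputable def mu {n m : ℕ} (h : Fin m → EuclideanSpace ℝ (Fin n)) (i j : Fin m) : ℝ :=
  (inner ℝ (h i) (gso h j) : ℝ) / ‖gso h j‖ ^ 2

/-- The lattice generated by the vectors `h`. -/
def latticePts {n m : ℕ} (h : Fin m → EuclideanSpace ℝ (Fin n)) :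
    Set (EuclideanSpace ℝ (Fin n)) :=
  {v | ∃ x : Fin m → ℤ, v = ∑ i, (x i : ℝ) • h i}

/-- `a(H)`: the minimum norm of the Gram-Schmidt vectors. -/
noncomputable def aMin {n m : ℕ} (h : Fin m → EuclideanSpace ℝ (Fin n)) : ℝ :=
  ⨅ i, ‖gso h i‖

/-- `A(H)`: the maximum norm of the Gram-Schmidt vectors. -/
noncomputable def AMax {n m : ℕ} (h : Fin m → EuclideanSpace ℝ (Fin n)) : ℝ :=
  ⨆ i, ‖gso h i‖

/-- LLL-reducedness (size reduction + Lovász condition) with parameter `δ`. -/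
def IsLLLReduced {n m : ℕ} (δ : ℝ) (h : Fin m → EuclideanSpace ℝ (Fin n)) : Prop :=
  (∀ k l : Fin m, l < k → |mu h k l| ≤ 1 / 2) ∧
  (∀ k l : Fin m, (l : ℕ) + 1 = (k : ℕ) →
    δ * ‖gso h l‖ ^ 2 ≤ ‖gso h k + mu h k l • gso h l‖ ^ 2)

/-- Append the coordinate `c` to the vector `v`. -/
noncomputable def aug {n : ℕ} (v : EuclideanSpace ℝ (Fin n)) (c : ℝ) :
    EuclideanSpace ℝ (Fin (n + 1)) :=
  (WithLp.equiv 2 (Fin (n + 1) → ℝ)).symm (Fin.snoc ((WithLp.equiv 2 (Fin n → ℝ)) v) c)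

/-- Columns of the augmented matrix `H̃`: the columns `(h i, 0)` followed by `(-y, t)`. -/
noncomputable def augCols {n m : ℕ} (h : Fin m → EuclideanSpace ℝ (Fin n))
    (y : EuclideanSpace ℝ (Fin n)) (t : ℝ) : Fin (m + 1) → EuclideanSpace ℝ (Fin (n + 1)) :=
  Fin.snoc (fun i => aug (h i) 0) (aug (-y) t)

/-- `v` is a `γ`-unique shortest vector of the lattice `L`. -/
def IsUniqueShortest {N : ℕ} (L : Set (EuclideanSpace ℝ (Fin N))) (γ : ℝ)
    (v : EuclideanSpace ℝ (Fin N)) : Prop :=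
  v ∈ L ∧ v ≠ 0 ∧ (∀ u ∈ L, u ≠ 0 → ‖v‖ ≤ ‖u‖) ∧
    ∀ u ∈ L, ‖u‖ ≤ γ * ‖v‖ → ¬ LinearIndependent ℝ ![u, v]


instance (m : ℕ) : WellFoundedLT (Fin m) := inferInstance

section helpers

variable {n m : ℕ}

lemma gso_eq (b : Fin m → EuclideanSpace ℝ (Fin n)) : gso b = InnerProductSpace.gramSchmidt ℝ b := rfl

lemma inner_b_gso_of_lt (b : Fin m → EuclideanSpace ℝ (Fin n)) {i j : Fin m} (hij : i < j) :
    (inner ℝ (b i) (gso b j) : ℝ) = 0 := by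
  rw [gso_eq, real_inner_comm]
  exact InnerProductSpace.gramSchmidt_inv_triangular ℝ b hij

lemma inner_b_gso_self (b : Fin m → EuclideanSpace ℝ (Fin n)) (j : Fin m) :
    (inner ℝ (b j) (gso b j) : ℝ) = ‖gso b j‖ ^ 2 := by
  rw [gso_eq]
  have h0 : ∀ i ∈ Finset.Iio j,
      (inner ℝ ((ℝ ∙ InnerProductSpace.gramSchmidt ℝ b i).starProjection (b j))
        (InnerProductSpace.gramSchmidt ℝ b j) : ℝ) = 0 := by
    intro i hi
    obtain ⟨c, hc⟩ := Submodule.mem_span_singleton.mp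
      ((ℝ ∙ InnerProductSpace.gramSchmidt ℝ b i).orthogonalProjectionOnto (b j)).2
    rw [Submodule.starProjection_apply, ← hc, real_inner_smul_left,
      InnerProductSpace.gramSchmidt_orthogonal ℝ b (Finset.mem_Iio.mp hi).ne, mul_zero]
  conv_lhs => rw [InnerProductSpace.gramSchmidt_def' ℝ b j]
  rw [inner_add_left, real_inner_self_eq_norm_sq, sum_inner, Finset.sum_eq_zero h0, add_zero]

lemma inner_latt_gso (b : Fin m → EuclideanSpace ℝ (Fin n)) (z : Fin m → ℤ) (j : Fin m)
    (hz : ∀ i, j < i → z i = 0) :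
    (inner ℝ (∑ i, (z i : ℝ) • b i) (gso b j) : ℝ) = (z j : ℝ) * ‖gso b j‖ ^ 2 := by
  rw [sum_inner]
  rw [Finset.sum_eq_single j]
  · rw [real_inner_smul_left, inner_b_gso_self]
  · intro i _ hij
    rcases lt_or_gt_of_ne hij with h | h
    · rw [real_inner_smul_left, inner_b_gso_of_lt b h, mul_zero]
    · rw [hz i h]
      simp
  · simp

lemma gso_le_norm (b : Fin m → EuclideanSpace ℝ (Fin n)) (hli : LinearIndependent ℝ b)
    (z : Fin m → ℤ) (j : Fin m) (hzj : z j ≠ 0) (hz : ∀ i, j < i → z i = 0) :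
    ‖gso b j‖ ≤ ‖∑ i, (z i : ℝ) • b i‖ := by
  have hne : gso b j ≠ 0 := by
    rw [gso_eq]; exact InnerProductSpace.gramSchmidt_ne_zero j hli
  have hpos : (0:ℝ) < ‖gso b j‖ := norm_pos_iff.mpr hne
  have h1 : |(z j : ℝ)| * ‖gso b j‖ ^ 2 ≤ ‖∑ i, (z i : ℝ) • b i‖ * ‖gso b j‖ := by
    have := abs_real_inner_le_norm (∑ i, (z i : ℝ) • b i) (gso b j)
    rw [inner_latt_gso b z j hz] at this
    calc |(z j : ℝ)| * ‖gso b j‖ ^ 2 = |(z j : ℝ) * ‖gso b j‖ ^ 2| := by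
          rw [abs_mul, abs_of_nonneg (sq_nonneg ‖gso b j‖)]
      _ ≤ ‖∑ i, (z i : ℝ) • b i‖ * ‖gso b j‖ := this
  have habs : (1:ℝ) ≤ |(z j : ℝ)| := by
    have : (1:ℤ) ≤ |z j| := Int.one_le_abs hzj
    calc (1:ℝ) = ((1:ℤ):ℝ) := by norm_num
      _ ≤ ((|z j| : ℤ) : ℝ) := by exact_mod_cast this
      _ = |(z j : ℝ)| := by push_cast; ring
  nlinarith [norm_nonneg (∑ i, (z i : ℝ) • b i)]

lemma lovasz_step (b : Fin m → EuclideanSpace ℝ (Fin n)) {δ : ℝ}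
    (hδ : δ ∈ Set.Ioo (1/4 : ℝ) 1) (hred : IsLLLReduced δ b) {k l : Fin m}
    (hkl : (l : ℕ) + 1 = (k : ℕ)) :
    ‖gso b l‖ ^ 2 ≤ (1 / (δ - 1/4)) * ‖gso b k‖ ^ 2 := by
  have hlk : l < k := by rw [Fin.lt_def]; omega
  have h1 := hred.2 k l hkl
  have h2 := hred.1 k l hlk
  have horth : (inner ℝ (gso b k) (gso b l) : ℝ) = 0 := by
    rw [gso_eq]; exact InnerProductSpace.gramSchmidt_orthogonal ℝ b hlk.ne'
  have hexp : ‖gso b k + mu b k l • gso b l‖ ^ 2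
      = ‖gso b k‖ ^ 2 + (mu b k l) ^ 2 * ‖gso b l‖ ^ 2 := by
    rw [norm_add_sq_real, real_inner_smul_right, horth, mul_zero, norm_smul,
      Real.norm_eq_abs, mul_pow, sq_abs]
    ring
  have hmu : (mu b k l) ^ 2 ≤ 1/4 := by
    nlinarith [abs_nonneg (mu b k l), sq_abs (mu b k l)]
  have hd : (0:ℝ) < δ - 1/4 := by linarith [hδ.1]
  rw [one_div, mul_comm, ← div_eq_mul_inv, le_div_iff₀ hd]
  nlinarith [sq_nonneg ‖gso b l‖, mul_le_mul_of_nonneg_right hmu (sq_nonneg ‖gso b l‖)]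

lemma gso_bot (hm : 0 < m) (b : Fin m → EuclideanSpace ℝ (Fin n)) :
    gso b ⟨0, hm⟩ = b ⟨0, hm⟩ := by
  rw [gso_eq, InnerProductSpace.gramSchmidt_def]
  have : Finset.Iio (⟨0, hm⟩ : Fin m) = ∅ := by
    apply Finset.eq_empty_of_forall_notMem
    intro i hi
    rw [Finset.mem_Iio, Fin.lt_def] at hi
    exact Nat.not_lt_zero _ hi
  rw [this, Finset.sum_empty, sub_zero]

lemma b0_le_pow (hm : 0 < m) (b : Fin m → EuclideanSpace ℝ (Fin n)) {δ : ℝ}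
    (hδ : δ ∈ Set.Ioo (1/4 : ℝ) 1) (hred : IsLLLReduced δ b) {α : ℝ}
    (hα : α = 1 / (δ - 1/4)) (j : Fin m) :
    ‖b ⟨0, hm⟩‖ ^ 2 ≤ α ^ (j : ℕ) * ‖gso b j‖ ^ 2 := by
  have hd : (0:ℝ) < δ - 1/4 := by linarith [hδ.1]
  have hαpos : (0:ℝ) < α := by rw [hα]; positivity
  suffices H : ∀ N : ℕ, ∀ j : Fin m, (j : ℕ) = N →
      ‖b ⟨0, hm⟩‖ ^ 2 ≤ α ^ N * ‖gso b j‖ ^ 2 from H (j : ℕ) j rfl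
  intro N
  induction N with
  | zero =>
    intro j hj
    have : j = ⟨0, hm⟩ := Fin.ext hj
    rw [this, pow_zero, one_mul, gso_bot hm b]
  | succ N ih =>
    intro j hj
    have hNm : N < m := by omega
    set l : Fin m := ⟨N, hNm⟩ with hl
    have h1 := ih l rfl
    have h2 : ‖gso b l‖ ^ 2 ≤ α * ‖gso b j‖ ^ 2 := by
      rw [hα]
      exact lovasz_step b hδ hred (by simp [hl, hj])
    calc ‖b ⟨0, hm⟩‖ ^ 2 ≤ α ^ N * ‖gso b l‖ ^ 2 := h1
      _ ≤ α ^ N * (α * ‖gso b j‖ ^ 2) := by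
          apply mul_le_mul_of_nonneg_left h2 (by positivity)
      _ = α ^ (N + 1) * ‖gso b j‖ ^ 2 := by ring

end helpers

/-- if a lattice has an `α^((m-1)/2)`-unique shortest vector `v` and
`b` is an LLL-reduced basis, then `b_1` is a nonzero integer multiple of `v`;
if moreover `v` is primitive then `b_1 = ±v`. -/
theorem statement7 {n m : ℕ} (hm : 0 < m)
    (b : Fin m → EuclideanSpace ℝ (Fin n)) (hli : LinearIndependent ℝ b)
    (δ : ℝ) (hδ : δ ∈ Set.Ioo (1/4 : ℝ) 1)
    (hred : IsLLLReduced δ b)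
    (α : ℝ) (hα : α = 1 / (δ - 1/4))
    (v : EuclideanSpace ℝ (Fin n))
    (hvL : v ∈ latticePts b) (hv0 : v ≠ 0)
    (hshort : ∀ u ∈ latticePts b, u ≠ 0 → ‖v‖ ≤ ‖u‖)
    (huniq : ∀ u ∈ latticePts b, ‖u‖ ≤ α ^ (((m : ℝ) - 1) / 2) * ‖v‖ →
      ¬ LinearIndependent ℝ ![u, v]) :
    (∃ q : ℤ, q ≠ 0 ∧ b ⟨0, hm⟩ = (q : ℝ) • v) ∧
      ((∀ u ∈ latticePts b, ∀ q : ℤ, 2 ≤ |q| → v ≠ (q : ℝ) • u) →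
        b ⟨0, hm⟩ = v ∨ b ⟨0, hm⟩ = -v) := by
  set i0 : Fin m := ⟨0, hm⟩ with hi0
  have hd : (0:ℝ) < δ - 1/4 := by linarith [hδ.1]
  have hαpos : (0:ℝ) < α := by rw [hα]; positivity
  have hα1 : (1:ℝ) ≤ α := by
    rw [hα, le_div_iff₀ hd]; linarith [hδ.2]
  have hb0L : b i0 ∈ latticePts b := by
    refine ⟨fun i => if i = i0 then 1 else 0, ?_⟩
    simp [ite_smul, apply_ite (fun q : ℤ => (q : ℝ))]
  have hb0ne : b i0 ≠ 0 := hli.ne_zero i0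
  have hb0pos : (0:ℝ) < ‖b i0‖ := norm_pos_iff.mpr hb0ne
  obtain ⟨z, hz⟩ := hvL
  have hzexists : ∃ i, z i ≠ 0 := by
    by_contra h
    push_neg at h
    exact hv0 (by rw [hz]; simp [h])
  have hsne : (Finset.univ.filter (fun i => z i ≠ 0)).Nonempty := by
    obtain ⟨i, hi⟩ := hzexists
    exact ⟨i, by simp [hi]⟩
  set j := (Finset.univ.filter (fun i => z i ≠ 0)).max' hsne with hj
  have hzj : z j ≠ 0 := by
    have := Finset.max'_mem _ hsne
    simpa using this
  have hzgt : ∀ i, j < i → z i = 0 := by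
    intro i hi
    by_contra h
    exact absurd hi (not_lt.mpr (Finset.le_max' _ i (by simp [h])))
  have hgso_le : ‖gso b j‖ ≤ ‖v‖ := by
    rw [hz]; exact gso_le_norm b hli z j hzj hzgt
  have hkey : ‖b i0‖ ≤ α ^ (((m:ℝ) - 1) / 2) * ‖v‖ := by
    have h1 : ‖b i0‖^2 ≤ α ^ (j:ℕ) * ‖gso b j‖^2 := b0_le_pow hm b hδ hred hα j
    have h2 : α ^ (j:ℕ) ≤ α ^ (m-1) :=
      pow_le_pow_right₀ hα1 (by have := j.isLt; omega)
    have h3 : ‖gso b j‖^2 ≤ ‖v‖^2 := pow_le_pow_left₀ (norm_nonneg _) hgso_le 2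
    have h4 : ‖b i0‖^2 ≤ α ^ (m-1) * ‖v‖^2 := by
      calc ‖b i0‖^2 ≤ α ^ (j:ℕ) * ‖gso b j‖^2 := h1
        _ ≤ α ^ (m-1) * ‖v‖^2 := mul_le_mul h2 h3 (sq_nonneg _) (by positivity)
    have hc2 : (α ^ (((m:ℝ) - 1) / 2)) ^ 2 = α ^ (m-1) := by
      rw [← Real.rpow_natCast (α ^ (((m:ℝ) - 1) / 2)) 2, ← Real.rpow_mul hαpos.le]
      rw [show ((m:ℝ) - 1) / 2 * ((2:ℕ):ℝ) = ((m - 1 : ℕ) : ℝ) by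
        push_cast [Nat.cast_sub hm]; ring]
      exact Real.rpow_natCast α (m-1)
    rw [← pow_le_pow_iff_left₀ (norm_nonneg _)
      (mul_nonneg (Real.rpow_nonneg hαpos.le _) (norm_nonneg _)) (two_ne_zero),
      mul_pow, hc2]
    exact h4
  have hnli := huniq (b i0) hb0L hkey
  rw [linearIndependent_fin2] at hnli
  simp only [Matrix.cons_val_one, Matrix.head_cons, Matrix.cons_val_zero] at hnli
  push_neg at hnli
  obtain ⟨a, ha⟩ := hnli hv0
  have hsum : ∑ i, (a * (z i : ℝ) - (if i = i0 then 1 else 0)) • b i = 0 := by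
    have e1 : ∑ i, (a * (z i : ℝ)) • b i = a • v := by
      rw [hz, Finset.smul_sum]
      exact Finset.sum_congr rfl fun i _ => mul_smul a _ _
    have e2 : ∑ i, ((if i = i0 then (1:ℝ) else 0)) • b i = b i0 := by
      simp [ite_smul]
    simp only [sub_smul]
    rw [Finset.sum_sub_distrib, e1, e2, ha, sub_self]
  have hcoef := linearIndependent_iff'.mp hli Finset.univ _ hsum
  have hc0 : a * (z i0 : ℝ) - 1 = 0 := by
    have := hcoef i0 (Finset.mem_univ _)
    simpa using this
  have hane : a ≠ 0 := by
    intro h; rw [h] at hc0; norm_num at hc0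
  have hzi : ∀ i, i ≠ i0 → z i = 0 := by
    intro i hi
    have := hcoef i (Finset.mem_univ _)
    simp [hi] at this
    rcases this with h | h
    · exact absurd h hane
    · exact h
  have hveq : v = (z i0 : ℝ) • b i0 := by
    rw [hz, Finset.sum_eq_single i0]
    · intro i _ hii
      rw [hzi i hii]; simp
    · intro h; exact absurd (Finset.mem_univ i0) h
  have hz0ne : z i0 ≠ 0 := by
    intro h; rw [h] at hc0; norm_num at hc0
  have hvle : ‖v‖ ≤ ‖b i0‖ := hshort (b i0) hb0L hb0ne
  have hnorm : ‖v‖ = |(z i0 : ℝ)| * ‖b i0‖ := by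
    rw [hveq, norm_smul, Real.norm_eq_abs]
  have habs_le : |(z i0 : ℝ)| ≤ 1 := by nlinarith
  have habs_le' : |z i0| ≤ 1 := by
    exact_mod_cast (by rwa [← Int.cast_abs] at habs_le : ((|z i0| : ℤ) : ℝ) ≤ 1)
  have hcases : z i0 = 1 ∨ z i0 = -1 := by
    have h' := abs_le.mp habs_le'
    omega
  have hsq : (z i0 : ℝ) * (z i0 : ℝ) = 1 := by
    rcases hcases with h | h <;> rw [h] <;> norm_num
  have hb0v : b i0 = ((z i0 : ℤ) : ℝ) • v := by
    rw [hveq, smul_smul, hsq, one_smul]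
  refine ⟨⟨z i0, hz0ne, hb0v⟩, fun _ => ?_⟩
  rcases hcases with h | h
  · left; rw [hb0v, h]; push_cast; rw [one_smul]
  · right; rw [hb0v, h]; push_cast; rw [neg_smul, one_smul]
end

section
/- Let H ∈ M_{n×m}(ℝ) have linearly independent columns, x ∈ ℤ^m, y ∈ ℝ^n, w = y − Hx. Let h′_1, …, h′_m be an LLL-reduced basis of L(H) with parameter δ ∈ (1/4, 1), α = 1/(δ − 1/4), and set t = ε a(H′) where 0 < ε ≤ 1/(2√2 · α^{m − 1/2}); suppose ‖w‖ ≤ ε d_H. If b̃_1, …, b̃_{m+1} is any LLL-reduced basis (parameter δ) of L(H̃), with b̃_j = H̃ ũ_j for a unimodular matrix Ũ ∈ M_{(m+1)×(m+1)}(ℤ), then b̃_1 = ±(Hx − y, t), and the first column of Ũ equals ±(x, 1); in particular, augmented lattice reduction correctly recovers x. -/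
open scoped BigOperators

section AuxLemmas

variable {n m : ℕ}

lemma gso_orth (h : Fin m → EuclideanSpace ℝ (Fin n)) {i j : Fin m} (hij : i ≠ j) :
    (inner ℝ (gso h i) (gso h j) : ℝ) = 0 :=
  @InnerProductSpace.gramSchmidt_orthogonal ℝ _ _ _ _ (Fin m) _ _ (inferInstance : WellFoundedLT (Fin m)) h _ _ hij

lemma gso_def'' (h : Fin m → EuclideanSpace ℝ (Fin n)) (i : Fin m) :
    h i = gso h i + ∑ k ∈ Finset.Iio i,
      ((inner ℝ (gso h k) (h i) : ℝ) / (‖gso h k‖ : ℝ) ^ 2) • gso h k :=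
  @InnerProductSpace.gramSchmidt_def'' ℝ _ _ _ _ (Fin m) _ _ (inferInstance : WellFoundedLT (Fin m)) h i

lemma gso_ne_zero (h : Fin m → EuclideanSpace ℝ (Fin n)) (hli : LinearIndependent ℝ h)
    (i : Fin m) : gso h i ≠ 0 :=
  @InnerProductSpace.gramSchmidt_ne_zero ℝ _ _ _ _ (Fin m) _ _ (inferInstance : WellFoundedLT (Fin m)) h i hli

lemma gso_first (hm : 0 < m) (h : Fin m → EuclideanSpace ℝ (Fin n)) :
    gso h ⟨0, hm⟩ = h ⟨0, hm⟩ := by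
  have hempty : Finset.Iio (⟨0, hm⟩ : Fin m) = ∅ := by
    ext k; simp [Finset.mem_Iio, Fin.lt_def]
  have hd := gso_def'' h ⟨0, hm⟩
  rw [hempty, Finset.sum_empty, add_zero] at hd
  exact hd.symm

lemma inner_h_gso (h : Fin m → EuclideanSpace ℝ (Fin n)) {i j : Fin m} (hij : i < j) :
    (inner ℝ (h i) (gso h j) : ℝ) = 0 := by
  rw [gso_def'' h i, inner_add_left, sum_inner, gso_orth h hij.ne]
  rw [Finset.sum_eq_zero, add_zero]
  intro k hk
  rw [real_inner_smul_left, gso_orth h (((Finset.mem_Iio.mp hk).trans hij).ne), mul_zero]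

lemma inner_self_h_gso (h : Fin m → EuclideanSpace ℝ (Fin n)) (j : Fin m) :
    (inner ℝ (h j) (gso h j) : ℝ) = ‖gso h j‖ ^ 2 := by
  rw [gso_def'' h j, inner_add_left, sum_inner, real_inner_self_eq_norm_sq]
  rw [Finset.sum_eq_zero, add_zero]
  intro k hk
  rw [real_inner_smul_left, gso_orth h (Finset.mem_Iio.mp hk).ne, mul_zero]

lemma key_lower (h : Fin m → EuclideanSpace ℝ (Fin n)) (c : Fin m → ℝ) (j : Fin m)
    (hcj : 1 ≤ |c j|) (hc : ∀ i, j < i → c i = 0) :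
    ‖gso h j‖ ≤ ‖∑ i, c i • h i‖ := by
  have hinner : (inner ℝ (∑ i, c i • h i) (gso h j) : ℝ) = c j * ‖gso h j‖ ^ 2 := by
    rw [sum_inner, Finset.sum_eq_single j]
    · rw [real_inner_smul_left, inner_self_h_gso]
    · intro i _ hij
      rcases lt_or_gt_of_ne hij with hlt | hgt
      · rw [real_inner_smul_left, inner_h_gso h hlt, mul_zero]
      · rw [hc i hgt, zero_smul, inner_zero_left]
    · simp
  have h3 : |(inner ℝ (∑ i, c i • h i) (gso h j) : ℝ)| ≤ ‖∑ i, c i • h i‖ * ‖gso h j‖ :=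
    abs_real_inner_le_norm _ _
  rw [hinner, abs_mul, abs_of_nonneg (by positivity : (0:ℝ) ≤ ‖gso h j‖ ^ 2)] at h3
  have h4 : ‖gso h j‖ ^ 2 ≤ ‖∑ i, c i • h i‖ * ‖gso h j‖ :=
    le_trans (le_mul_of_one_le_left (by positivity) hcj) h3
  rcases eq_or_lt_of_le (norm_nonneg (gso h j)) with h0 | h0
  · exact le_trans h0.ge (norm_nonneg _)
  · exact (mul_le_mul_iff_of_pos_right h0).mp (by rwa [sq] at h4)

lemma gso_adjacent {δ : ℝ} (hδ1 : 1/4 < δ) (h : Fin m → EuclideanSpace ℝ (Fin n))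
    (hred : IsLLLReduced δ h) {l k : Fin m} (hlk : (l:ℕ) + 1 = (k:ℕ)) :
    ‖gso h l‖ ^ 2 ≤ (1/(δ - 1/4)) * ‖gso h k‖ ^ 2 := by
  have hltk : l < k := by rw [Fin.lt_def]; omega
  have hlov := hred.2 k l hlk
  have hmu := hred.1 k l hltk
  have hexp : ‖gso h k + mu h k l • gso h l‖ ^ 2
      = ‖gso h k‖ ^ 2 + (mu h k l) ^ 2 * ‖gso h l‖ ^ 2 := by
    rw [norm_add_sq_real, real_inner_smul_right, gso_orth h hltk.ne', mul_zero, mul_zero,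
      add_zero, norm_smul, mul_pow, Real.norm_eq_abs, sq_abs]
  rw [hexp] at hlov
  have hpos : 0 < δ - 1/4 := by linarith
  have hkey : (δ - 1/4) * ‖gso h l‖ ^ 2 ≤ ‖gso h k‖ ^ 2 := by
    have hmu2 : (mu h k l) ^ 2 ≤ 1/4 := by
      rw [← sq_abs]; nlinarith [abs_nonneg (mu h k l)]
    nlinarith [sq_nonneg (‖gso h l‖)]
  calc ‖gso h l‖ ^ 2 = (1/(δ - 1/4)) * ((δ - 1/4) * ‖gso h l‖ ^ 2) := by
        rw [one_div, inv_mul_cancel_left₀ hpos.ne']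
    _ ≤ (1/(δ - 1/4)) * ‖gso h k‖ ^ 2 :=
        mul_le_mul_of_nonneg_left hkey (by positivity)

lemma gso_chain (hm : 0 < m) {δ : ℝ} (hδ1 : 1/4 < δ) (h : Fin m → EuclideanSpace ℝ (Fin n))
    (hred : IsLLLReduced δ h) (j : Fin m) :
    ‖gso h ⟨0, hm⟩‖ ^ 2 ≤ (1/(δ - 1/4)) ^ (j:ℕ) * ‖gso h j‖ ^ 2 := by
  have hpos : (0:ℝ) < 1/(δ - 1/4) := by
    have : 0 < δ - 1/4 := by linarith
    positivity
  obtain ⟨jv, hjv⟩ := j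
  induction jv with
  | zero => simp
  | succ k ih =>
    have hk : k < m := by omega
    have step := gso_adjacent hδ1 h hred (l := ⟨k, hk⟩) (k := ⟨k+1, hjv⟩) rfl
    calc ‖gso h ⟨0, hm⟩‖ ^ 2 ≤ (1/(δ - 1/4)) ^ k * ‖gso h ⟨k, hk⟩‖ ^ 2 := ih hk
      _ ≤ (1/(δ - 1/4)) ^ k * ((1/(δ - 1/4)) * ‖gso h ⟨k+1, hjv⟩‖ ^ 2) :=
          mul_le_mul_of_nonneg_left step (by positivity)
      _ = (1/(δ - 1/4)) ^ (k+1) * ‖gso h ⟨k+1, hjv⟩‖ ^ 2 := by ring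

lemma aug_apply (v : EuclideanSpace ℝ (Fin n)) (c : ℝ) (i : Fin (n+1)) :
    aug v c i = Fin.snoc (α := fun _ => ℝ) (fun j => v j) c i := rfl

lemma aug_castSucc (v : EuclideanSpace ℝ (Fin n)) (c : ℝ) (i : Fin n) :
    aug v c (Fin.castSucc i) = v i := by
  rw [aug_apply, Fin.snoc_castSucc]

lemma aug_last (v : EuclideanSpace ℝ (Fin n)) (c : ℝ) :
    aug v c (Fin.last n) = c := by
  rw [aug_apply, Fin.snoc_last]

lemma aug_add (v w : EuclideanSpace ℝ (Fin n)) (c d : ℝ) :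
    aug v c + aug w d = aug (v + w) (c + d) := by
  ext i
  refine Fin.lastCases ?_ ?_ i
  · simp [PiLp.add_apply, aug_last]
  · intro j; simp [PiLp.add_apply, aug_castSucc]

lemma aug_smul (r : ℝ) (v : EuclideanSpace ℝ (Fin n)) (c : ℝ) :
    r • aug v c = aug (r • v) (r * c) := by
  ext i
  refine Fin.lastCases ?_ ?_ i
  · simp [PiLp.smul_apply, aug_last]
  · intro j; simp [PiLp.smul_apply, aug_castSucc]

lemma aug_neg (v : EuclideanSpace ℝ (Fin n)) (c : ℝ) :
    -aug v c = aug (-v) (-c) := by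
  have := aug_smul (-1) v c
  simpa using this

lemma aug_inj {v w : EuclideanSpace ℝ (Fin n)} {c d : ℝ} (hvw : aug v c = aug w d) :
    v = w ∧ c = d := by
  constructor
  · ext j
    have := congrFun (congrArg (fun z : EuclideanSpace ℝ (Fin (n+1)) =>
      (z : Fin (n+1) → ℝ)) hvw) (Fin.castSucc j)
    simpa [aug_castSucc] using this
  · have := congrFun (congrArg (fun z : EuclideanSpace ℝ (Fin (n+1)) =>
      (z : Fin (n+1) → ℝ)) hvw) (Fin.last n)
    simpa [aug_last] using this

lemma norm_aug_sq (v : EuclideanSpace ℝ (Fin n)) (c : ℝ) :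
    ‖aug v c‖ ^ 2 = ‖v‖ ^ 2 + c ^ 2 := by
  have h1 : ‖aug v c‖ ^ 2 = ∑ i, ‖aug v c i‖ ^ 2 := by
    rw [EuclideanSpace.norm_eq, Real.sq_sqrt (by positivity)]
  have h2 : ‖v‖ ^ 2 = ∑ i, ‖v i‖ ^ 2 := by
    rw [EuclideanSpace.norm_eq, Real.sq_sqrt (by positivity)]
  rw [h1, h2, Fin.sum_univ_castSucc]
  simp [aug_castSucc, aug_last, sq_abs]

lemma sum_aug (N : ℕ) (v : Fin N → EuclideanSpace ℝ (Fin n)) (c : Fin N → ℝ)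
    (r : Fin N → ℝ) :
    ∑ i, r i • aug (v i) (c i) = aug (∑ i, r i • v i) (∑ i, r i * c i) := by
  induction N with
  | zero =>
    simp only [Finset.univ_eq_empty, Finset.sum_empty]
    ext i
    refine Fin.lastCases ?_ ?_ i
    · simp [aug_last]
    · intro j; simp [aug_castSucc]
  | succ N ih =>
    rw [Fin.sum_univ_castSucc (f := fun i => r i • aug (v i) (c i)),
      Fin.sum_univ_castSucc (f := fun i => r i • v i),
      Fin.sum_univ_castSucc (f := fun i => r i * c i),
      ih, aug_smul, aug_add]

lemma sum_augCols (h : Fin m → EuclideanSpace ℝ (Fin n)) (y : EuclideanSpace ℝ (Fin n))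
    (t : ℝ) (r : Fin (m+1) → ℝ) :
    ∑ i, r i • augCols h y t i
      = aug ((∑ i : Fin m, r (Fin.castSucc i) • h i) - r (Fin.last m) • y)
          (r (Fin.last m) * t) := by
  rw [Fin.sum_univ_castSucc (f := fun i => r i • augCols h y t i)]
  have h2 : augCols h y t (Fin.last m) = aug (-y) t := by
    simp [augCols]
  have h3 : ∑ i : Fin m, r (Fin.castSucc i) • augCols h y t (Fin.castSucc i)
      = aug (∑ i : Fin m, r (Fin.castSucc i) • h i) 0 := by
    have h1 : ∀ i : Fin m, augCols h y t (Fin.castSucc i) = aug (h i) 0 := by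
      intro i; simp [augCols]
    simp_rw [h1]
    rw [sum_aug m h (fun _ => 0) (fun i => r (Fin.castSucc i))]
    simp
  rw [h2, h3, aug_smul, aug_add, smul_neg, ← sub_eq_add_neg, zero_add]

lemma exists_max_nonzero {N : ℕ} (c : Fin N → ℤ) (hc : ∃ i, c i ≠ 0) :
    ∃ j, c j ≠ 0 ∧ ∀ i, j < i → c i = 0 := by
  classical
  let s := Finset.univ.filter (fun i => c i ≠ 0)
  have hs : s.Nonempty := by
    obtain ⟨i, hi⟩ := hc; exact ⟨i, by simp [s, hi]⟩
  refine ⟨s.max' hs, ?_, ?_⟩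
  · have := s.max'_mem hs; simpa [s] using this
  · intro i hi
    by_contra hci
    have hmem : i ∈ s := by simp [s, hci]
    exact absurd (Finset.le_max' s i hmem) (not_le.mpr hi)

end AuxLemmas

set_option maxHeartbeats 1600000 in
/-- under the hypotheses of Lemma 3.2, any LLL-reduced basis `b` of the
augmented lattice `L(H̃)`, with change of basis matrix `U` unimodular, has
`b_1 = ±(Hx - y, t)` and first column of `U` equal to `±(x, 1)`: augmented lattice
reduction correctly recovers `x`. -/
theorem statement8 {n m : ℕ} (hm : 0 < m)
    (h : Fin m → EuclideanSpace ℝ (Fin n)) (hli : LinearIndependent ℝ h)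
    (x : Fin m → ℤ) (y : EuclideanSpace ℝ (Fin n))
    (h' : Fin m → EuclideanSpace ℝ (Fin n)) (hli' : LinearIndependent ℝ h')
    (hsame : latticePts h' = latticePts h)
    (δ : ℝ) (hδ : δ ∈ Set.Ioo (1/4 : ℝ) 1)
    (hred : IsLLLReduced δ h')
    (α : ℝ) (hα : α = 1 / (δ - 1/4))
    (dH : ℝ) (hdH : IsLeast {r : ℝ | ∃ v ∈ latticePts h, v ≠ 0 ∧ ‖v‖ = r} dH)
    (ε t : ℝ) (hε0 : 0 < ε) (hε : ε ≤ 1 / (2 * Real.sqrt 2 * α ^ ((m : ℝ) - 1/2)))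
    (ht : t = ε * aMin h')
    (hw : ‖y - ∑ i, (x i : ℝ) • h i‖ ≤ ε * dH)
    (U : Matrix (Fin (m + 1)) (Fin (m + 1)) ℤ) (hU : U.det = 1 ∨ U.det = -1)
    (b : Fin (m + 1) → EuclideanSpace ℝ (Fin (n + 1)))
    (hb : ∀ j, b j = ∑ i, (U i j : ℝ) • augCols h y t i)
    (hbred : IsLLLReduced δ b) :
    (b 0 = aug ((∑ i, (x i : ℝ) • h i) - y) t ∨
        b 0 = -aug ((∑ i, (x i : ℝ) • h i) - y) t) ∧
      ((fun i => U i 0) = Fin.snoc x 1 ∨ (fun i => U i 0) = -Fin.snoc x 1) := by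
  classical
  have hδ1 : 1/4 < δ := hδ.1
  have hδ2 : δ < 1 := hδ.2
  have hα1 : 1 < α := by
    rw [hα]
    have h1 : 0 < δ - 1/4 := by linarith
    have h2 : δ - 1/4 < 1 := by linarith
    exact one_lt_one_div h1 h2
  have hαpos : (0:ℝ) < α := lt_trans one_pos hα1
  haveI : Nonempty (Fin m) := ⟨⟨0, hm⟩⟩
  set Hx := ∑ i, (x i : ℝ) • h i with hHxdef
  have hcoef : ∀ a : Fin m → ℝ, ∑ i, a i • h i = 0 → ∀ i, a i = 0 :=
    Fintype.linearIndependent_iff.mp hli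
  have hlat_norm : ∀ cc : Fin m → ℤ, (∃ i, cc i ≠ 0) → dH ≤ ‖∑ i, (cc i : ℝ) • h i‖ := by
    intro cc hcne
    refine hdH.2 ⟨∑ i, (cc i : ℝ) • h i, ⟨cc, rfl⟩, ?_, rfl⟩
    intro h0
    obtain ⟨i, hi⟩ := hcne
    exact hi (by exact_mod_cast hcoef _ h0 i)
  have hdHpos : 0 < dH := by
    obtain ⟨v, hvmem, hvne, hvnorm⟩ := hdH.1
    rw [← hvnorm]; exact norm_pos_iff.mpr hvne
  have haMin_le : ∀ i, aMin h' ≤ ‖gso h' i‖ := fun i =>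
    ciInf_le (Set.Finite.bddBelow (Set.finite_range _)) i
  obtain ⟨i₀, hi₀⟩ := exists_eq_ciInf_of_finite (f := fun i => ‖gso h' i‖)
  have hi₀' : ‖gso h' i₀‖ = aMin h' := hi₀
  have haMinpos : 0 < aMin h' := by
    rw [← hi₀']; exact norm_pos_iff.mpr (gso_ne_zero h' hli' i₀)
  have htpos : 0 < t := by rw [ht]; positivity
  have haMin_dH : aMin h' ≤ dH := by
    obtain ⟨v, hvmem, hvne, hvnorm⟩ := hdH.1
    rw [← hsame] at hvmem
    obtain ⟨cc, hcc⟩ := hvmem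
    have hcex : ∃ i, cc i ≠ 0 := by
      by_contra hno
      push_neg at hno
      exact hvne (by rw [hcc]; simp [hno])
    obtain ⟨j, hj, hjmax⟩ := exists_max_nonzero cc hcex
    have hk := key_lower h' (fun i => (cc i : ℝ)) j
      (by simpa using (show (1:ℝ) ≤ |(cc j : ℝ)| by exact_mod_cast Int.one_le_abs hj))
      (fun i hi => by simpa using (show ((cc i : ℝ)) = 0 by exact_mod_cast hjmax i hi))
    calc aMin h' ≤ ‖gso h' j‖ := haMin_le j
      _ ≤ ‖∑ i, (cc i : ℝ) • h' i‖ := hk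
      _ = dH := by rw [← hcc, hvnorm]
  have hdH_le : dH ^ 2 ≤ α ^ (m - 1) * (aMin h') ^ 2 := by
    have hmem : h' ⟨0, hm⟩ ∈ latticePts h := by
      rw [← hsame]
      refine ⟨fun k => if k = ⟨0, hm⟩ then 1 else 0, ?_⟩
      have hterm : ∀ k, ((if k = (⟨0, hm⟩ : Fin m) then (1:ℤ) else 0 : ℤ) : ℝ) • h' k
          = if k = (⟨0, hm⟩ : Fin m) then h' k else 0 := by
        intro k; split <;> simp
      rw [Finset.sum_congr rfl (fun k _ => hterm k), Finset.sum_ite_eq' Finset.univ]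
      simp
    have hne : h' ⟨0, hm⟩ ≠ 0 := hli'.ne_zero _
    have hdle : dH ≤ ‖h' ⟨0, hm⟩‖ := hdH.2 ⟨_, hmem, hne, rfl⟩
    have hchain := gso_chain hm hδ1 h' hred i₀
    have hpow : α ^ (i₀ : ℕ) ≤ α ^ (m - 1) := pow_le_pow_right₀ hα1.le (by omega)
    calc dH ^ 2 ≤ ‖h' ⟨0, hm⟩‖ ^ 2 := pow_le_pow_left₀ hdHpos.le hdle 2
      _ = ‖gso h' ⟨0, hm⟩‖ ^ 2 := by rw [gso_first hm h']
      _ ≤ α ^ (i₀ : ℕ) * ‖gso h' i₀‖ ^ 2 := by rw [hα]; exact hchain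
      _ = α ^ (i₀ : ℕ) * (aMin h') ^ 2 := by rw [hi₀']
      _ ≤ α ^ (m - 1) * (aMin h') ^ 2 := mul_le_mul_of_nonneg_right hpow (by positivity)
  have h8 : 8 * ε ^ 2 * α ^ (2 * m - 1) ≤ 1 := by
    set R := α ^ ((m : ℝ) - 1/2) with hR
    have hRpos : 0 < R := Real.rpow_pos_of_pos hαpos _
    have hs2 : (0:ℝ) < Real.sqrt 2 := Real.sqrt_pos.mpr (by norm_num)
    have hD : (0:ℝ) < 2 * Real.sqrt 2 * R := by positivity
    have h1 : ε * (2 * Real.sqrt 2 * R) ≤ 1 := by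
      have := mul_le_mul_of_nonneg_right hε hD.le
      rwa [one_div, inv_mul_cancel₀ hD.ne'] at this
    have h2 : (ε * (2 * Real.sqrt 2 * R)) ^ 2 ≤ 1 := by
      nlinarith [mul_pos hε0 hD]
    have hR2 : R ^ 2 = α ^ (2 * m - 1) := by
      rw [hR, ← Real.rpow_natCast (α ^ ((m:ℝ) - 1/2)) 2, ← Real.rpow_mul hαpos.le,
        ← Real.rpow_natCast α (2 * m - 1)]
      congr 1
      have hcast : ((2 * m - 1 : ℕ) : ℝ) = 2 * (m : ℝ) - 1 := by
        have h1m : 1 ≤ 2 * m := by omega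
        rw [Nat.cast_sub h1m]
        push_cast; ring
      rw [hcast]
      push_cast
      ring
    have hsq2 : (Real.sqrt 2) ^ 2 = 2 := Real.sq_sqrt (by norm_num)
    have he : (ε * (2 * Real.sqrt 2 * R)) ^ 2 = 8 * ε ^ 2 * R ^ 2 := by
      rw [mul_pow, mul_pow, mul_pow, hsq2]; ring
    rw [he, hR2] at h2
    exact h2
  have hpowm1 : (1:ℝ) ≤ α ^ (m - 1) := by
    calc (1:ℝ) = 1 ^ (m - 1) := (one_pow _).symm
      _ ≤ α ^ (m - 1) := pow_le_pow_left₀ (by norm_num) hα1.le (m - 1)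
  have hsplit : α ^ m * α ^ (m - 1) = α ^ (2 * m - 1) := by
    rw [← pow_add]; congr 1; omega
  have h8m : 8 * ε ^ 2 * α ^ m ≤ 1 := by
    have e1 : 8 * ε ^ 2 * α ^ m ≤ 8 * ε ^ 2 * α ^ m * α ^ (m - 1) :=
      le_mul_of_one_le_right (by positivity) hpowm1
    calc 8 * ε ^ 2 * α ^ m ≤ 8 * ε ^ 2 * α ^ m * α ^ (m - 1) := e1
      _ = 8 * ε ^ 2 * α ^ (2 * m - 1) := by rw [mul_assoc, hsplit]
      _ ≤ 1 := h8
  set w := y - Hx with hwdef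
  set wt := aug (Hx - y) t with hwt
  have hwt_sq : ‖wt‖ ^ 2 ≤ 2 * ε ^ 2 * dH ^ 2 := by
    have h1 : ‖wt‖ ^ 2 = ‖Hx - y‖ ^ 2 + t ^ 2 := norm_aug_sq _ _
    have h2 : ‖Hx - y‖ = ‖w‖ := by rw [hwdef, norm_sub_rev]
    have h3 : ‖w‖ ^ 2 ≤ (ε * dH) ^ 2 := pow_le_pow_left₀ (norm_nonneg _) hw 2
    have h4 : t ^ 2 ≤ (ε * dH) ^ 2 := by
      rw [ht]
      have := mul_le_mul_of_nonneg_left haMin_dH hε0.le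
      exact pow_le_pow_left₀ (by positivity) this 2
    rw [h1, h2]; nlinarith [h3, h4]
  have hUdet : IsUnit U.det := by
    rcases hU with h1 | h1 <;> rw [h1]
    · exact isUnit_one
    · exact isUnit_one.neg
  set c : Fin (m+1) → ℤ := Fin.snoc x 1 with hcdef
  set c' : Fin (m+1) → ℤ := U⁻¹.mulVec c with hc'def
  have hUc' : U.mulVec c' = c := by
    rw [hc'def, Matrix.mulVec_mulVec, Matrix.mul_nonsing_inv U hUdet, Matrix.one_mulVec]
  have hwt_cols : ∑ i, (c i : ℝ) • augCols h y t i = wt := by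
    rw [sum_augCols, hwt, hcdef]
    simp [Fin.snoc_last, Fin.snoc_castSucc, ← hHxdef]
  have hci : ∀ i, (c i : ℝ) = ∑ j, (U i j : ℝ) * (c' j : ℝ) := by
    intro i
    have hh := congrFun hUc' i
    simp only [Matrix.mulVec, dotProduct] at hh
    rw [← hh]
    push_cast
    rfl
  have hwtb : wt = ∑ j, (c' j : ℝ) • b j := by
    rw [← hwt_cols]
    calc ∑ i, (c i : ℝ) • augCols h y t i
        = ∑ i, (∑ j, (U i j : ℝ) * (c' j : ℝ)) • augCols h y t i := by
          exact Finset.sum_congr rfl fun i _ => by rw [hci i]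
      _ = ∑ i, ∑ j, ((c' j : ℝ) * (U i j : ℝ)) • augCols h y t i := by
          refine Finset.sum_congr rfl fun i _ => ?_
          rw [Finset.sum_smul]
          exact Finset.sum_congr rfl fun jj _ => by rw [mul_comm]
      _ = ∑ j, ∑ i, ((c' j : ℝ) * (U i j : ℝ)) • augCols h y t i := Finset.sum_comm
      _ = ∑ j, (c' j : ℝ) • b j := by
          refine Finset.sum_congr rfl fun j _ => ?_
          rw [hb j, Finset.smul_sum]
          exact Finset.sum_congr rfl fun i _ => by rw [smul_smul]
  have hc'ne : ∃ i, c' i ≠ 0 := by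
    by_contra hno
    push_neg at hno
    have hlast : c (Fin.last m) = 0 := by
      rw [← hUc']
      simp [Matrix.mulVec, dotProduct, hno]
    rw [hcdef] at hlast
    simp at hlast
  obtain ⟨j, hj, hjmax⟩ := exists_max_nonzero c' hc'ne
  have hgb : ‖gso b j‖ ≤ ‖wt‖ := by
    rw [hwtb]
    exact key_lower b (fun i => (c' i : ℝ)) j
      (by simpa using (show (1:ℝ) ≤ |(c' j : ℝ)| by exact_mod_cast Int.one_le_abs hj))
      (fun i hi => by simpa using (show ((c' i : ℝ)) = 0 by exact_mod_cast hjmax i hi))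
  have h0fin : (⟨0, Nat.succ_pos m⟩ : Fin (m+1)) = 0 := by ext; simp
  have hb0_sq : ‖b 0‖ ^ 2 ≤ α ^ m * ‖wt‖ ^ 2 := by
    have hchain := gso_chain (Nat.succ_pos m) hδ1 b hbred j
    have hpj : α ^ (j : ℕ) ≤ α ^ m := pow_le_pow_right₀ hα1.le (by omega)
    have hg2 : ‖gso b j‖ ^ 2 ≤ ‖wt‖ ^ 2 := pow_le_pow_left₀ (norm_nonneg _) hgb 2
    calc ‖b 0‖ ^ 2 = ‖gso b ⟨0, Nat.succ_pos m⟩‖ ^ 2 := by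
          rw [gso_first (Nat.succ_pos m) b, h0fin]
      _ ≤ α ^ (j : ℕ) * ‖gso b j‖ ^ 2 := by rw [hα]; exact hchain
      _ ≤ α ^ m * ‖wt‖ ^ 2 := mul_le_mul hpj hg2 (by positivity) (by positivity)
  set q : ℤ := U (Fin.last m) 0 with hqdef
  set x' : Fin m → ℤ := fun i => U (Fin.castSucc i) 0 with hx'def
  have hbform : b 0 = aug ((∑ i, (x' i : ℝ) • h i) - (q : ℝ) • y) ((q : ℝ) * t) := by
    simp only [hx'def, hqdef]
    rw [hb 0]
    simp only [sum_augCols]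
  have hb0norm : ‖b 0‖ ^ 2
      = ‖(∑ i, (x' i : ℝ) • h i) - (q : ℝ) • y‖ ^ 2 + ((q : ℝ) * t) ^ 2 := by
    rw [hbform, norm_aug_sq]
  have k1 : α ^ m * ‖wt‖ ^ 2 ≤ α ^ m * (2 * ε ^ 2 * dH ^ 2) :=
    mul_le_mul_of_nonneg_left hwt_sq (by positivity)
  have k2 : 8 * ε ^ 2 * α ^ m * dH ^ 2 ≤ 1 * dH ^ 2 :=
    mul_le_mul_of_nonneg_right h8m (sq_nonneg dH)
  by_cases hq0 : q = 0
  · exfalso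
    by_cases hx0 : ∀ i, x' i = 0
    · have hcol0 : ∀ i, U i 0 = 0 := by
        intro i
        refine Fin.lastCases ?_ (fun i => ?_) i
        · rw [← hqdef]; exact hq0
        · have : U (Fin.castSucc i) 0 = x' i := by rw [hx'def]
          rw [this]; exact hx0 i
      have hdet0 : U.det = 0 := Matrix.det_eq_zero_of_column_eq_zero 0 hcol0
      rcases hU with h1 | h1 <;> omega
    · push_neg at hx0
      obtain ⟨i1, hi1⟩ := hx0
      have hdle : dH ≤ ‖∑ i, (x' i : ℝ) • h i‖ := hlat_norm x' ⟨i1, hi1⟩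
      have hb02 : ‖b 0‖ ^ 2 = ‖∑ i, (x' i : ℝ) • h i‖ ^ 2 := by
        rw [hb0norm, hq0]
        norm_num
      have hlow : dH ^ 2 ≤ ‖b 0‖ ^ 2 := by
        rw [hb02]; exact pow_le_pow_left₀ hdHpos.le hdle 2
      nlinarith [hb0_sq, hlow, k1, k2, pow_pos hdHpos 2]
  · by_cases hxx : ∀ i, x' i = q * x i
    · have hcol : ∀ i, U i 0 = q * c i := by
        intro i
        refine Fin.lastCases ?_ (fun i => ?_) i
        · rw [hcdef, Fin.snoc_last, mul_one, ← hqdef]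
        · have h1 : U (Fin.castSucc i) 0 = x' i := by rw [hx'def]
          rw [h1, hcdef, Fin.snoc_castSucc]
          exact hxx i
      have hdvd : q ∣ U.det := by
        rw [Matrix.det_succ_column_zero]
        refine Finset.dvd_sum fun i _ => ?_
        rw [hcol i]
        exact ((dvd_mul_right q (c i)).mul_left _).mul_right _
      have hqunit : q = 1 ∨ q = -1 := Int.isUnit_iff.mp (isUnit_of_dvd_unit hdvd hUdet)
      rcases hqunit with h1 | h1
      · refine ⟨Or.inl ?_, Or.inl ?_⟩
        · rw [hbform, hwt]
          have hsum : ∑ i, (x' i : ℝ) • h i = Hx := by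
            rw [hHxdef]
            refine Finset.sum_congr rfl fun i _ => ?_
            rw [hxx i, h1]; push_cast; rw [one_mul]
          rw [hsum, h1]
          push_cast
          rw [one_smul, one_mul]
        · funext i
          refine Fin.lastCases ?_ (fun i => ?_) i
          · have := hcol (Fin.last m)
            rw [hcdef] at this
            simp only [Fin.snoc_last] at this ⊢
            rw [this, h1, one_mul, hcdef, Fin.snoc_last]
          · have := hcol (Fin.castSucc i)
            rw [hcdef] at this
            simp only [Fin.snoc_castSucc] at this ⊢
            rw [this, h1, one_mul, hcdef, Fin.snoc_castSucc]
      · refine ⟨Or.inr ?_, Or.inr ?_⟩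
        · rw [hbform, hwt, aug_neg]
          have hsum : ∑ i, (x' i : ℝ) • h i = -Hx := by
            rw [hHxdef, ← Finset.sum_neg_distrib]
            refine Finset.sum_congr rfl fun i _ => ?_
            rw [hxx i, h1]
            push_cast
            rw [neg_one_mul, neg_smul]
          rw [hsum, h1]
          have hc1 : ((-1:ℤ):ℝ) = -1 := by norm_num
          rw [hc1, neg_one_smul, neg_one_mul]
          congr 1
          abel
        · funext i
          refine Fin.lastCases ?_ (fun i => ?_) i
          · have := hcol (Fin.last m)
            rw [hcdef] at this
            simp only [Fin.snoc_last, Pi.neg_apply] at this ⊢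
            rw [this, h1, hcdef, Fin.snoc_last]; ring
          · have := hcol (Fin.castSucc i)
            rw [hcdef] at this
            simp only [Fin.snoc_castSucc, Pi.neg_apply] at this ⊢
            rw [this, h1, hcdef, Fin.snoc_castSucc]; ring
    · push_neg at hxx
      obtain ⟨i1, hi1⟩ := hxx
      exfalso
      set v2 := ∑ i, ((x' i - q * x i : ℤ) : ℝ) • h i with hv2
      have hdv2 : dH ≤ ‖v2‖ := hlat_norm _ ⟨i1, sub_ne_zero.mpr hi1⟩
      have hfirst : (∑ i, (x' i : ℝ) • h i) - (q : ℝ) • y = v2 - (q : ℝ) • w := by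
        rw [hv2, hwdef, hHxdef]
        have hterm : ∀ i ∈ Finset.univ, ((x' i - q * x i : ℤ) : ℝ) • h i
            = (x' i : ℝ) • h i - (q : ℝ) • ((x i : ℝ) • h i) := by
          intro i _
          push_cast
          rw [sub_smul, smul_smul]
        rw [Finset.sum_congr rfl hterm, Finset.sum_sub_distrib, ← Finset.smul_sum, smul_sub]
        abel
      have hq1 : (1:ℝ) ≤ |(q : ℝ)| := by exact_mod_cast Int.one_le_abs hq0
      have hqw : ‖(q : ℝ) • w‖ ≤ |(q : ℝ)| * (ε * dH) := by
        rw [norm_smul, Real.norm_eq_abs]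
        exact mul_le_mul_of_nonneg_left hw (abs_nonneg _)
      have htri : ‖v2‖ - ‖(q : ℝ) • w‖ ≤ ‖v2 - (q : ℝ) • w‖ := norm_sub_norm_le _ _
      have hqsq : (1:ℝ) ≤ (q : ℝ) ^ 2 := by
        nlinarith [hq1, abs_nonneg (q : ℝ), sq_abs (q : ℝ)]
      by_cases hq2 : |(q : ℝ)| * ε ≤ 1/2
      · have hmul : |(q : ℝ)| * ε * dH ≤ (1/2) * dH :=
          mul_le_mul_of_nonneg_right hq2 hdHpos.le
        have hfge : dH/2 ≤ ‖v2 - (q : ℝ) • w‖ := by nlinarith [htri, hqw, hdv2]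
        have hf2 : (dH/2) ^ 2 ≤ ‖v2 - (q : ℝ) • w‖ ^ 2 :=
          pow_le_pow_left₀ (by positivity) hfge 2
        have hqt : t ^ 2 ≤ ((q : ℝ) * t) ^ 2 := by
          nlinarith [mul_nonneg (by linarith : (0:ℝ) ≤ (q : ℝ) ^ 2 - 1) (sq_nonneg t)]
        have hlow : dH ^ 2 / 4 + t ^ 2 ≤ ‖b 0‖ ^ 2 := by
          rw [hb0norm, hfirst]
          nlinarith [hf2, hqt]
        nlinarith [hb0_sq, hlow, k1, k2, pow_pos htpos 2]
      · push_neg at hq2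
        have hqt : (aMin h') ^ 2 / 4 < ((q : ℝ) * t) ^ 2 := by
          have e : ((q : ℝ) * t) ^ 2 = (|(q : ℝ)| * ε) ^ 2 * (aMin h') ^ 2 := by
            have e2 : (|(q : ℝ)| * ε) ^ 2 = (q : ℝ) ^ 2 * ε ^ 2 := by
              rw [mul_pow, sq_abs]
            rw [ht, e2]; ring
          have h14 : (1/2 : ℝ) ^ 2 < (|(q : ℝ)| * ε) ^ 2 :=
            pow_lt_pow_left₀ hq2 (by norm_num) (by norm_num)
          calc (aMin h') ^ 2 / 4 = (1/2:ℝ)^2 * (aMin h')^2 := by ring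
            _ < (|(q : ℝ)| * ε) ^ 2 * (aMin h')^2 :=
                mul_lt_mul_of_pos_right h14 (pow_pos haMinpos 2)
            _ = ((q : ℝ) * t) ^ 2 := e.symm
        have hlow : ((q : ℝ) * t) ^ 2 ≤ ‖b 0‖ ^ 2 := by
          rw [hb0norm]
          linarith [sq_nonneg (‖(∑ i, (x' i : ℝ) • h i) - (q : ℝ) • y‖)]
        have hup : ‖b 0‖ ^ 2 ≤ 2 * ε ^ 2 * α ^ (2 * m - 1) * (aMin h') ^ 2 := by
          calc ‖b 0‖ ^ 2 ≤ α ^ m * ‖wt‖ ^ 2 := hb0_sq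
            _ ≤ α ^ m * (2 * ε ^ 2 * dH ^ 2) := k1
            _ ≤ α ^ m * (2 * ε ^ 2 * (α ^ (m - 1) * (aMin h') ^ 2)) := by
                refine mul_le_mul_of_nonneg_left ?_ (by positivity)
                linarith [mul_le_mul_of_nonneg_left hdH_le
                  (by positivity : (0:ℝ) ≤ 2 * ε ^ 2)]
            _ = 2 * ε ^ 2 * α ^ (2 * m - 1) * (aMin h') ^ 2 := by rw [← hsplit]; ring
        linarith [hqt, hlow, hup,
          mul_le_mul_of_nonneg_right h8 (sq_nonneg (aMin h'))]
end
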